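/- Let gε(w,z) = −i c_w z_n + Q(z) in coordinates centered at w with c_w = |∇ρ(w)|/2 > 0 and |Q(z)| ≤ c|z|², and suppose Re gε(w,z) ≥ c'(−ρ(z) + |w−z|²) for z ∈ D̄. Then for z ∈ D̄: |gε(w,z)| ≈ |x_n| + |w−z|² + |ρ(z)|, where x_n = Re z_n, with constants independent of ε, w, z. -/

import Mathlib

/-- Size of the modified Levi polynomial: in special coordinates centered at
`w ∈ bD` (so `z` is the coordinate of the point, `z_n` the normal complex
coordinate), if `gε(z) = −i c_w z_n + Q(z)` with `|Q(z)| ≤ c|z|²`,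
`Re gε(z) ≥ c′(−ρ(z)+|z|²)` on `D̄`, and `ρ(z) = −2c_w·Im z_n + O(|z|²)`,
then `|gε(z)| ≈ |Re z_n| + |z|² + |ρ(z)|` for `z ∈ D̄`,
with constants independent of `ε`, `w`, `z`. -/
theorem stmt9 (n : ℕ) (c c' Cρ cw : ℝ)
    (hc : 0 < c) (hc' : 0 < c') (hCρ : 0 < Cρ) (hcw : 0 < cw) :
    ∃ m M : ℝ, 0 < m ∧ 0 < M ∧
      ∀ (g Q : EuclideanSpace ℂ (Fin (n + 1)) → ℂ)
        (ρ : EuclideanSpace ℂ (Fin (n + 1)) → ℝ),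
        (∀ z, g z = -Complex.I * (cw : ℂ) * z (Fin.last n) + Q z) →
        (∀ z, ‖Q z‖ ≤ c * ‖z‖ ^ 2) →
        (∀ z, |ρ z + 2 * cw * (z (Fin.last n)).im| ≤ Cρ * ‖z‖ ^ 2) →
        (∀ z, ρ z ≤ 0 → c' * (-ρ z + ‖z‖ ^ 2) ≤ (g z).re) →
        ∀ z, ρ z ≤ 0 → ‖z‖ ≤ 1 →
          m * (|(z (Fin.last n)).re| + ‖z‖ ^ 2 + |ρ z|) ≤ ‖g z‖ ∧
            ‖g z‖ ≤ M * (|(z (Fin.last n)).re| + ‖z‖ ^ 2 + |ρ z|) := by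
  refine ⟨min cw 1 / (1 + (c + 1) / c'), cw + Cρ + c + 1, by positivity, by positivity, ?_⟩
  intro g Q ρ hg hQ hρ hre z hz hz1
  set zn := z (Fin.last n) with hzn
  have hQz := hQ z
  have hρz := hρ z
  have hrez := hre z hz
  have hB : (0:ℝ) ≤ ‖z‖ ^ 2 := by positivity
  have hA : (0:ℝ) ≤ |zn.re| := abs_nonneg _
  have hR : (0:ℝ) ≤ |ρ z| := abs_nonneg _
  have hρabs : -ρ z = |ρ z| := (abs_of_nonpos hz).symm
  have hgre : (g z).re = cw * zn.im + (Q z).re := by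
    rw [hg z]; simp [Complex.add_re, Complex.mul_re, Complex.mul_im, hzn]
  have hgim : (g z).im = -(cw * zn.re) + (Q z).im := by
    rw [hg z]; simp [Complex.add_im, Complex.mul_re, Complex.mul_im, hzn]
  have hre_le : (g z).re ≤ ‖g z‖ := Complex.re_le_norm (g z)
  have him_le : |(g z).im| ≤ ‖g z‖ := Complex.abs_im_le_norm (g z)
  have h1 : c' * (|ρ z| + ‖z‖ ^ 2) ≤ ‖g z‖ := by nlinarith
  have hQim : |(Q z).im| ≤ c * ‖z‖ ^ 2 :=
    le_trans (Complex.abs_im_le_norm _) hQz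
  have h2 : cw * |zn.re| ≤ ‖g z‖ + c * ‖z‖ ^ 2 := by
    have heq : cw * zn.re = (Q z).im - (g z).im := by rw [hgim]; ring
    calc cw * |zn.re| = |cw * zn.re| := by rw [abs_mul, abs_of_nonneg hcw.le]
      _ = |(Q z).im - (g z).im| := by rw [heq]
      _ ≤ |(Q z).im| + |(g z).im| := abs_sub _ _
      _ ≤ c * ‖z‖ ^ 2 + ‖g z‖ := add_le_add hQim him_le
      _ = ‖g z‖ + c * ‖z‖ ^ 2 := by ring
  constructor
  · rw [div_mul_eq_mul_div, div_le_iff₀ (by positivity)]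
    have h1' : (c + 1) * (|ρ z| + ‖z‖ ^ 2) ≤ (c + 1) / c' * ‖g z‖ := by
      rw [div_mul_eq_mul_div, le_div_iff₀ hc']
      nlinarith
    nlinarith [min_le_left cw 1, min_le_right cw 1,
      mul_le_mul_of_nonneg_right (min_le_left cw 1) hA,
      mul_le_mul_of_nonneg_right (min_le_right cw 1) hB,
      mul_le_mul_of_nonneg_right (min_le_right cw 1) hR]
  · have hy : 2 * cw * |zn.im| ≤ |ρ z| + Cρ * ‖z‖ ^ 2 := by
      have heq : 2 * cw * zn.im = (ρ z + 2 * cw * zn.im) - ρ z := by ring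
      calc 2 * cw * |zn.im| = |2 * cw * zn.im| := by
            rw [abs_mul, abs_of_nonneg (by positivity : (0:ℝ) ≤ 2 * cw)]
        _ = |(ρ z + 2 * cw * zn.im) - ρ z| := by congr 1
        _ ≤ |ρ z + 2 * cw * zn.im| + |ρ z| := abs_sub _ _
        _ ≤ Cρ * ‖z‖ ^ 2 + |ρ z| := add_le_add hρz le_rfl
        _ = |ρ z| + Cρ * ‖z‖ ^ 2 := by ring
    have hup : ‖g z‖ ≤ cw * ‖zn‖ + c * ‖z‖ ^ 2 := by
      rw [hg z]
      refine le_trans (norm_add_le _ _) (add_le_add ?_ hQz)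
      simp [norm_mul, hzn, abs_of_nonneg hcw.le]
    have habs : ‖zn‖ ≤ |zn.re| + |zn.im| := Complex.norm_le_abs_re_add_abs_im zn
    nlinarith [abs_nonneg zn.im, hcw.le, hc.le, hCρ.le]
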